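/- Let (a_n) be an arithmetic sequence such that lim_{n→∞} b_n / (Σ_{i=1}^n (b_i - 1)) = 0. Then (a_n) is weakly density lifting invariant (weakly dli). -/

import Mathlib

open Filter Topology Set

noncomputable section

/-- The sequence of ratios `b n = a n / a (n-1)` of an arithmetic sequence. -/
def ratios (a : ℕ → ℕ) (n : ℕ) : ℕ := a n / a (n - 1)

/-- An arithmetic sequence: `a 0 = 1`, strictly increasing, each term divides the next. -/
def IsArithSeq (a : ℕ → ℕ) : Prop :=
  a 0 = 1 ∧ (∀ n, a n < a (n + 1)) ∧ (∀ n, a n ∣ a (n + 1))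

/-- The indices `n_k` with `a k = d (n k)`: `n 0 = 1`, `n (k+1) = n k + (b (k+1) - 1)`. -/
def nseq (a : ℕ → ℕ) : ℕ → ℕ
  | 0 => 1
  | k + 1 => nseq a k + (ratios a (k + 1) - 1)

/-- The lifting function `L(A) = ⋃_{k ∈ A} [n_{k-1}, n_k - 1]`. -/
def liftSet (a : ℕ → ℕ) (A : Set ℕ) : Set ℕ :=
  ⋃ k ∈ A, Set.Icc (nseq a (k - 1)) (nseq a k - 1)

/-- `A ⊆ ℕ` has natural density `δ`. -/
def HasDensity (A : Set ℕ) (δ : ℝ) : Prop :=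
  Tendsto (fun n : ℕ => ((A ∩ Set.Iio n).ncard : ℝ) / n) atTop (𝓝 δ)

/-- The upper natural density of `A ⊆ ℕ`. -/
def upperDensity (A : Set ℕ) : ℝ :=
  limsup (fun n : ℕ => ((A ∩ Set.Iio n).ncard : ℝ) / n) atTop

/-- The sequence `(d n)`: the increasing enumeration of `{r * a k : k ≥ 0, 1 ≤ r < b (k+1)}`. -/
def dSeq (a : ℕ → ℕ) : ℕ → ℕ :=
  Nat.nth (fun m => ∃ k r : ℕ, 1 ≤ r ∧ r < ratios a (k + 1) ∧ m = r * a k)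

/-- The characterized subgroup `t_{(u n)}(𝕋)`. -/
def charSub (u : ℕ → ℤ) : Set (AddCircle (1 : ℝ)) :=
  {x | Tendsto (fun n => u n • x) atTop (𝓝 0)}

/-- The statistically characterized subgroup `t^s_{(u n)}(𝕋)`. -/
def statChar (u : ℕ → ℤ) : Set (AddCircle (1 : ℝ)) :=
  {x | ∀ ε : ℝ, 0 < ε → HasDensity {n : ℕ | ε ≤ ‖u n • x‖} 0}

/-- Density lifting invariant. -/
def Dli (a : ℕ → ℕ) : Prop :=
  ∀ A : Set ℕ, A.Infinite → HasDensity A 0 → HasDensity (liftSet a A) 0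

/-- Weakly density lifting invariant. -/
def WeaklyDli (a : ℕ → ℕ) : Prop :=
  ∃ A : Set ℕ, A.Infinite ∧ ∀ m : ℕ, HasDensity (liftSet a ((fun x => x - m) '' A)) 0

/-- Strongly non density lifting invariant. -/
def StronglyNonDli (a : ℕ → ℕ) : Prop :=
  ∀ A : Set ℕ, A.Infinite → 0 < upperDensity (liftSet a A)

section aux
variable {a : ℕ → ℕ}

lemma a_pos (ha : IsArithSeq a) : ∀ n, 0 < a n := by
  intro n
  induction n with
  | zero => simp [ha.1]
  | succ k ih => exact lt_trans ih (ha.2.1 k)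

lemma ratios_two_le (ha : IsArithSeq a) (n : ℕ) : 2 ≤ ratios a (n + 1) := by
  obtain ⟨c, hc⟩ := ha.2.2 n
  have h1 := ha.2.1 n
  have h0 := a_pos ha n
  have hc2 : 2 ≤ c := by
    rcases Nat.lt_or_ge c 2 with hlt | hge
    · interval_cases c <;> omega
    · exact hge
  have hr : ratios a (n + 1) = c := by
    simp only [ratios, Nat.add_sub_cancel, hc]
    exact Nat.mul_div_cancel_left c h0
  omega

lemma nseq_mono : Monotone (nseq a) :=
  monotone_nat_of_le_succ fun k => Nat.le_add_right _ _

lemma one_le_nseq (k : ℕ) (ha : IsArithSeq a) : k + 1 ≤ nseq a k := by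
  induction k with
  | zero => simp [nseq]
  | succ k ih =>
    have := ratios_two_le ha k
    show k + 2 ≤ nseq a k + (ratios a (k + 1) - 1)
    omega

lemma nseq_recur_real (ha : IsArithSeq a) (k : ℕ) :
    (nseq a (k + 1) : ℝ) = nseq a k + (ratios a (k + 1) : ℝ) - 1 := by
  have h2 := ratios_two_le ha k
  show ((nseq a k + (ratios a (k + 1) - 1) : ℕ) : ℝ) = _
  push_cast [Nat.cast_sub (by omega : 1 ≤ ratios a (k + 1))]
  ring

lemma nseq_real (ha : IsArithSeq a) (k : ℕ) :
    (nseq a k : ℝ) = 1 + ∑ i ∈ Finset.Icc 1 k, ((ratios a i : ℝ) - 1) := by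
  induction k with
  | zero => simp [nseq]
  | succ k ih =>
    rw [Finset.sum_Icc_succ_top (by omega : 1 ≤ k + 1), nseq_recur_real ha, ih]
    ring

lemma nseq_sub_real (ha : IsArithSeq a) (k : ℕ) (hk : 1 ≤ k) :
    (nseq a k : ℝ) - nseq a (k - 1) = (ratios a k : ℝ) - 1 := by
  obtain ⟨k', rfl⟩ : ∃ k', k = k' + 1 := ⟨k - 1, by omega⟩
  rw [nseq_recur_real ha]
  simp
  ring

end aux

def gseq (a : ℕ → ℕ) : ℕ → ℕ
  | 0 => 1
  | j + 1 => gseq a j + 1 + (j + 1) * (j + 1) * nseq a (gseq a j)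

section aux2
variable {a : ℕ → ℕ}

lemma gseq_strictMono : StrictMono (gseq a) :=
  strictMono_nat_of_lt_succ fun j => by
    show gseq a j < gseq a j + 1 + (j + 1) * (j + 1) * nseq a (gseq a j)
    omega

lemma gseq_ge (j : ℕ) : j + 1 ≤ gseq a j := by
  induction j with
  | zero => simp [gseq]
  | succ j ih =>
    have : gseq a j < gseq a (j + 1) := gseq_strictMono (Nat.lt_succ_self j)
    omega

lemma gseq_key (ha : IsArithSeq a) (j : ℕ) :
    (j + 1) * (j + 1) * nseq a (gseq a j) ≤ nseq a (gseq a (j + 1) - (j + 1)) := by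
  have h1 : j + 1 ≤ gseq a j := gseq_ge j
  have h2 : gseq a (j + 1) - (j + 1) + 1 ≤ nseq a (gseq a (j + 1) - (j + 1)) :=
    one_le_nseq _ ha
  have h3 : gseq a (j + 1) = gseq a j + 1 + (j + 1) * (j + 1) * nseq a (gseq a j) := rfl
  set L := (j + 1) * (j + 1) * nseq a (gseq a j) with hL
  omega

end aux2

lemma lift_count_le {a : ℕ → ℕ} (ha : IsArithSeq a) (g : ℕ → ℕ) (m N j : ℕ)
    (hj : ∀ i, nseq a (g i - m - 1) < N → i ≤ j) :
    ((liftSet a ((fun x => x - m) '' Set.range g) ∩ Set.Iio N).ncard : ℝ)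
      ≤ ∑ i ∈ Finset.range (j + 1), ((nseq a (g i - m) : ℝ) - nseq a (g i - m - 1)) := by
  classical
  set F : Finset ℕ :=
    (Finset.range (j + 1)).biUnion
      (fun i => Finset.Icc (nseq a (g i - m - 1)) (nseq a (g i - m) - 1)) with hF
  have hsub : liftSet a ((fun x => x - m) '' Set.range g) ∩ Set.Iio N ⊆ ↑F := by
    rintro x ⟨hx1, hx2⟩
    simp only [liftSet, Set.mem_iUnion, Set.mem_image, Set.mem_range, exists_prop] at hx1
    obtain ⟨k, ⟨y, ⟨i, rfl⟩, rfl⟩, hxk⟩ := hx1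
    have hxN : x < N := hx2
    have hiN : nseq a (g i - m - 1) < N := lt_of_le_of_lt hxk.1 hxN
    have hij : i ≤ j := hj i hiN
    simp only [hF, Finset.coe_biUnion, Finset.mem_coe, Finset.mem_range, Set.mem_iUnion,
      Finset.mem_Icc]
    exact ⟨i, by omega, hxk.1, hxk.2⟩
  have h1 : ((liftSet a ((fun x => x - m) '' Set.range g) ∩ Set.Iio N).ncard : ℝ) ≤ F.card := by
    have := Set.ncard_le_ncard hsub F.finite_toSet
    rw [Set.ncard_coe_finset] at this
    exact_mod_cast this
  refine h1.trans ?_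
  have h2 : (F.card : ℝ) ≤
      ∑ i ∈ Finset.range (j + 1),
        ((Finset.Icc (nseq a (g i - m - 1)) (nseq a (g i - m) - 1)).card : ℝ) := by
    exact_mod_cast Nat.cast_le.2 (Finset.card_biUnion_le)
  refine h2.trans (Finset.sum_le_sum fun i _ => ?_)
  have hle : nseq a (g i - m - 1) ≤ nseq a (g i - m) := nseq_mono (by omega)
  have h1' : 1 ≤ nseq a (g i - m) := by have := one_le_nseq (g i - m) ha; omega
  rw [Nat.card_Icc, Nat.sub_add_cancel h1', Nat.cast_sub hle]

set_option maxHeartbeats 1000000 in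
/-- if `b n / Σ_{i=1}^n (b i - 1) → 0` then `(a n)` is weakly dli. -/
theorem weaklyDli_of_ratio_limit (a : ℕ → ℕ) (ha : IsArithSeq a)
    (h : Tendsto
        (fun n : ℕ => (ratios a n : ℝ) / ∑ i ∈ Finset.Icc 1 n, ((ratios a i : ℝ) - 1))
        atTop (𝓝 0)) :
    WeaklyDli a := by
  classical
  refine ⟨Set.range (gseq a), Set.infinite_range_of_injective gseq_strictMono.injective, ?_⟩
  -- Step 1 : restate h with nseq
  have h1 : Tendsto (fun n : ℕ => (ratios a n : ℝ) / ((nseq a n : ℝ) - 1)) atTop (𝓝 0) := by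
    refine h.congr fun n => ?_
    rw [nseq_real ha n]; congr 1; ring
  -- Step 2 : b n / nseq (n-1) → 0
  have h2 : Tendsto (fun n : ℕ => (ratios a n : ℝ) / (nseq a (n - 1) : ℝ)) atTop (𝓝 0) := by
    have hb0 : ∀ n : ℕ, (0:ℝ) ≤ (ratios a n : ℝ) / (nseq a (n - 1) : ℝ) := fun n => by positivity
    have hev : ∀ᶠ n in atTop, (ratios a n : ℝ) / (nseq a (n - 1) : ℝ)
        ≤ 2 * ((ratios a n : ℝ) / ((nseq a n : ℝ) - 1)) := by
      have hsmall : ∀ᶠ n in atTop, (ratios a n : ℝ) / ((nseq a n : ℝ) - 1) < 1/2 :=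
        h1.eventually_lt_const (by norm_num)
      filter_upwards [hsmall, eventually_ge_atTop 1] with n hn hn1
      obtain ⟨k, rfl⟩ : ∃ k, n = k + 1 := ⟨n - 1, by omega⟩
      have hB : (2:ℝ) ≤ (ratios a (k + 1) : ℝ) := by exact_mod_cast ratios_two_le ha k
      have hP : (1:ℝ) ≤ (nseq a k : ℝ) := by
        have h' := one_le_nseq k ha
        have h'' : 1 ≤ nseq a k := by omega
        exact_mod_cast h''
      have hQeq : (nseq a (k + 1) : ℝ) - 1 = (nseq a k : ℝ) + (ratios a (k + 1) : ℝ) - 2 := by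
        rw [nseq_recur_real ha]; ring
      set B : ℝ := (ratios a (k + 1) : ℝ)
      set P : ℝ := (nseq a k : ℝ)
      set Q : ℝ := (nseq a (k + 1) : ℝ) - 1 with hQ
      have hQ1 : (1:ℝ) ≤ Q := by rw [hQeq]; linarith
      have hQP : Q ≤ 2 * P := by
        have hBQ : B < Q / 2 * 1 := by
          have := (div_lt_iff₀ (by linarith : (0:ℝ) < Q)).1 hn
          linarith
        rw [hQeq]; nlinarith
      have hP0 : (0:ℝ) < P := by linarith
      have hQ0 : (0:ℝ) < Q := by linarith
      show B / P ≤ 2 * (B / Q)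
      have h2q : 2 * (B / Q) = 2 * B / Q := by ring
      rw [h2q, div_le_div_iff₀ hP0 hQ0]
      nlinarith
    exact squeeze_zero' (Eventually.of_forall hb0) hev (by simpa using h1.const_mul 2)
  intro m
  have hgm : Tendsto (fun j : ℕ => gseq a j - m) atTop atTop := by
    refine tendsto_atTop_atTop.2 fun B => ⟨B + m, fun j hj => ?_⟩
    have := gseq_ge (a := a) j
    omega
  have h3 : Tendsto
      (fun j : ℕ => (ratios a (gseq a j - m) : ℝ) / (nseq a (gseq a j - m - 1) : ℝ))
      atTop (𝓝 0) := h2.comp hgm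
  show Tendsto _ atTop (𝓝 0)
  rw [Metric.tendsto_atTop]
  intro ε hε
  have hε4 : (0:ℝ) < ε / 4 := by linarith
  obtain ⟨J, hJ⟩ := Filter.eventually_atTop.1
    ((h3.eventually_lt_const hε4).and
      ((eventually_ge_atTop (m + 1)).and (eventually_ge_atTop (⌈(4:ℝ)/ε⌉₊ + 1))))
  set C : ℝ := ∑ i ∈ Finset.range (J + 1),
      ((nseq a (gseq a i - m) : ℝ) - nseq a (gseq a i - m - 1)) with hC
  have hterm0 : ∀ i : ℕ, (0:ℝ) ≤ (nseq a (gseq a i - m) : ℝ) - nseq a (gseq a i - m - 1) := by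
    intro i
    have h' : nseq a (gseq a i - m - 1) ≤ nseq a (gseq a i - m) := nseq_mono (by omega)
    have h'' : ((nseq a (gseq a i - m - 1) : ℕ) : ℝ) ≤ ((nseq a (gseq a i - m) : ℕ) : ℝ) :=
      Nat.cast_le.mpr h'
    linarith
  have hC0 : (0:ℝ) ≤ C := Finset.sum_nonneg fun i _ => hterm0 i
  refine ⟨⌈C/ε⌉₊ + 1, fun N hN => ?_⟩
  have hN1 : 1 ≤ N := by omega
  have hN0 : (0:ℝ) < N := by exact_mod_cast hN1
  have hCN : C < ε * N := by
    have h1' : C / ε ≤ (⌈C/ε⌉₊ : ℝ) := Nat.le_ceil _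
    have h2' : ((⌈C/ε⌉₊ + 1 : ℕ) : ℝ) ≤ N := by exact_mod_cast hN
    have h3' : C / ε < N := by push_cast at h2'; linarith
    calc C = C / ε * ε := by field_simp
    _ < N * ε := by exact mul_lt_mul_of_pos_right h3' hε
    _ = ε * N := by ring
  -- the finite set of relevant indices
  set T : Finset ℕ := (Finset.range (N + m + 1)).filter
    (fun i => nseq a (gseq a i - m - 1) < N) with hT
  have hTsub : ∀ i : ℕ, nseq a (gseq a i - m - 1) < N → i ∈ T := by
    intro i hi
    have hA := one_le_nseq (gseq a i - m - 1) ha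
    have hB := gseq_ge (a := a) i
    simp only [hT, Finset.mem_filter, Finset.mem_range]
    exact ⟨by omega, hi⟩
  have key : ((liftSet a ((fun x => x - m) '' Set.range (gseq a)) ∩ Set.Iio N).ncard : ℝ)
      ≤ max (ε / 2 * N) C := by
    by_cases hTne : T.Nonempty
    · obtain ⟨j, hjmem, hmaxmem⟩ : ∃ j, j ∈ T ∧ ∀ i ∈ T, i ≤ j :=
        ⟨T.max' hTne, T.max'_mem hTne, fun i hi => T.le_max' i hi⟩
      have hjprop : nseq a (gseq a j - m - 1) < N := (Finset.mem_filter.1 hjmem).2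
      have hmax : ∀ i, nseq a (gseq a i - m - 1) < N → i ≤ j := fun i hi =>
        hmaxmem i (hTsub i hi)
      have hcount := lift_count_le ha (gseq a) m N j hmax
      by_cases hjJ : J ≤ j
      · refine le_trans ?_ (le_max_left _ _)
        obtain ⟨hJ1, hJ2, hJ3⟩ := hJ j hjJ
        obtain ⟨j', rfl⟩ : ∃ j', j = j' + 1 := ⟨j - 1, by omega⟩
        set D : ℝ := (nseq a (gseq a (j' + 1) - m - 1) : ℝ) with hD
        have hD1 : (1:ℝ) ≤ D := by
          have h' := one_le_nseq (gseq a (j' + 1) - m - 1) ha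
          have h'' : 1 ≤ nseq a (gseq a (j' + 1) - m - 1) := by omega
          rw [hD]; exact_mod_cast h''
        have hD0 : (0:ℝ) < D := by linarith
        have hDN : D ≤ N := by rw [hD]; exact_mod_cast Nat.le_of_lt hjprop
        -- bound sum over range (j'+1)
        have hsum1 : ∑ i ∈ Finset.range (j' + 1),
            ((nseq a (gseq a i - m) : ℝ) - nseq a (gseq a i - m - 1))
            ≤ (j' + 1 : ℝ) * (nseq a (gseq a j') : ℝ) := by
          have hle := Finset.sum_le_card_nsmul (Finset.range (j' + 1))
            (fun i => (nseq a (gseq a i - m) : ℝ) - nseq a (gseq a i - m - 1))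
            ((nseq a (gseq a j') : ℝ)) ?_
          · simpa [Finset.card_range, nsmul_eq_mul] using hle
          · intro i hi
            rw [Finset.mem_range] at hi
            have hm1 : nseq a (gseq a i - m) ≤ nseq a (gseq a i) := nseq_mono (by omega)
            have hm2 : nseq a (gseq a i) ≤ nseq a (gseq a j') :=
              nseq_mono (gseq_strictMono.monotone (by omega))
            have hnn : (0:ℝ) ≤ (nseq a (gseq a i - m - 1) : ℝ) := by positivity
            have hcast : ((nseq a (gseq a i - m) : ℕ) : ℝ) ≤ ((nseq a (gseq a j') : ℕ) : ℝ) :=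
              Nat.cast_le.mpr (le_trans hm1 hm2)
            linarith
        -- key growth bound
        have hkey : ((j' + 1 : ℕ) : ℝ) * ((j' + 1 : ℕ) : ℝ) * (nseq a (gseq a j') : ℝ) ≤ D := by
          have hk1 := gseq_key ha j'
          have hk2 : nseq a (gseq a (j' + 1) - (j' + 1)) ≤ nseq a (gseq a (j' + 1) - m - 1) := by
            refine nseq_mono ?_
            omega
          have hk3 := le_trans hk1 hk2
          rw [hD]
          exact_mod_cast hk3
        have hj4 : (4:ℝ) / ε ≤ (j' + 1 : ℝ) := by
          have h1' : ((4:ℝ)/ε) ≤ (⌈(4:ℝ)/ε⌉₊ : ℝ) := Nat.le_ceil _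
          have h2' : ((⌈(4:ℝ)/ε⌉₊ + 1 : ℕ) : ℝ) ≤ ((j' + 1 : ℕ) : ℝ) := by exact_mod_cast hJ3
          push_cast at h2'; linarith
        have hj0 : (0:ℝ) < (j' + 1 : ℝ) := by positivity
        have h4εj : (4:ℝ) ≤ ε * (j' + 1 : ℝ) := by
          rw [div_le_iff₀ hε] at hj4; linarith
        have hsum1' : (j' + 1 : ℝ) * (nseq a (gseq a j') : ℝ) ≤ ε / 4 * D := by
          have hn0 : (0:ℝ) ≤ (nseq a (gseq a j') : ℝ) := by positivity
          have hkey' : (j' + 1 : ℝ) * (j' + 1 : ℝ) * (nseq a (gseq a j') : ℝ) ≤ D := by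
            exact_mod_cast hkey
          nlinarith
        -- last term
        have hlast : (nseq a (gseq a (j' + 1) - m) : ℝ) - nseq a (gseq a (j' + 1) - m - 1)
            ≤ ε / 4 * D := by
          have hge1 : 1 ≤ gseq a (j' + 1) - m := by
            have := gseq_ge (a := a) (j' + 1); omega
          have hsub := nseq_sub_real ha (gseq a (j' + 1) - m) hge1
          have hbd : (ratios a (gseq a (j' + 1) - m) : ℝ) < ε / 4 * D := by
            have := (div_lt_iff₀ hD0).1 hJ1
            linarith
          have hB2 : (2:ℝ) ≤ (ratios a (gseq a (j' + 1) - m) : ℝ) := by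
            obtain ⟨k', hk'⟩ : ∃ k', gseq a (j' + 1) - m = k' + 1 := ⟨gseq a (j' + 1) - m - 1, by omega⟩
            rw [hk']; exact_mod_cast ratios_two_le ha k'
          linarith
        calc ((liftSet a ((fun x => x - m) '' Set.range (gseq a)) ∩ Set.Iio N).ncard : ℝ)
            ≤ ∑ i ∈ Finset.range (j' + 1 + 1),
              ((nseq a (gseq a i - m) : ℝ) - nseq a (gseq a i - m - 1)) := hcount
          _ = (∑ i ∈ Finset.range (j' + 1),
              ((nseq a (gseq a i - m) : ℝ) - nseq a (gseq a i - m - 1)))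
              + ((nseq a (gseq a (j' + 1) - m) : ℝ) - nseq a (gseq a (j' + 1) - m - 1)) :=
            Finset.sum_range_succ _ _
          _ ≤ ε / 4 * D + ε / 4 * D := by
            have hfin := le_trans hsum1 hsum1'
            push_cast at hfin ⊢
            linarith
          _ = ε / 2 * D := by ring
          _ ≤ ε / 2 * N := by nlinarith
      · refine le_trans ?_ (le_max_right _ _)
        refine hcount.trans ?_
        refine Finset.sum_le_sum_of_subset_of_nonneg
          (Finset.range_subset_range.2 (by omega)) fun i _ _ => hterm0 i
    · refine le_trans ?_ (le_max_right _ _)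
      have hmax : ∀ i, nseq a (gseq a i - m - 1) < N → i ≤ 0 := fun i hi =>
        absurd ⟨i, hTsub i hi⟩ hTne
      refine (lift_count_le ha (gseq a) m N 0 hmax).trans ?_
      refine Finset.sum_le_sum_of_subset_of_nonneg
        (Finset.range_subset_range.2 (by omega)) fun i _ _ => hterm0 i
  simp only [Real.dist_eq, sub_zero]
  rw [abs_of_nonneg (by positivity), div_lt_iff₀ hN0]
  refine lt_of_le_of_lt key (max_lt ?_ hCN)
  nlinarith
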